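/- Suppose the weight data satisfy the Li identities. Then for every k ∈ {0, …, n}, equation (key) holds: ∑_{p : λ_p = k} (ν_p(−a) + ν_p(a)) = ∑_{p : λ_p = k−1} ν_p(a) + ∑_{p : λ_p = k+1} ν_p(−a), where a sum over an empty index set is 0 (in particular the first sum on the right-hand side is 0 when k = 0). -/

import Mathlib

open Finset Polynomial

open Finset Polynomial

lemma aux_X_zpow_ne_one : ∀ (z : ℤ), z ≠ 0 → (RatFunc.X : RatFunc ℚ) ^ z ≠ 1 := by
  have hpos : ∀ (z : ℤ), 0 < z → (RatFunc.X : RatFunc ℚ) ^ z ≠ 1 := by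
    intro z hz h
    have h1 : (RatFunc.X : RatFunc ℚ) ^ z = RatFunc.X ^ z.toNat := by
      rw [← zpow_natCast, Int.toNat_of_nonneg hz.le]
    rw [h1] at h
    have h2 : algebraMap (Polynomial ℚ) (RatFunc ℚ) (Polynomial.X ^ z.toNat) =
        algebraMap (Polynomial ℚ) (RatFunc ℚ) 1 := by
      rw [map_pow, map_one, RatFunc.algebraMap_X, h]
    have h3 := RatFunc.algebraMap_injective ℚ h2
    have h4 := congrArg (fun q => Polynomial.coeff q 0) h3
    have h5 : z.toNat ≠ 0 := by omega
    simp [Polynomial.coeff_X_pow, Ne.symm h5] at h4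
  intro z hz h
  rcases lt_or_gt_of_ne hz with hneg | hposz
  · have : (RatFunc.X : RatFunc ℚ) ^ (-z) = 1 := by
      rw [zpow_neg, h, inv_one]
    exact hpos (-z) (by omega) this
  · exact hpos z hposz h

lemma aux_one_sub_ne (z : ℤ) (hz : z ≠ 0) : 1 - (RatFunc.X : RatFunc ℚ) ^ z ≠ 0 := by
  intro h
  exact aux_X_zpow_ne_one z hz (by linear_combination -h)

/-- exponent contribution of index `j` -/
def nexp (c : Prop) [Decidable c] (z : ℤ) : ℕ :=
  if c then (if 0 < z then z.natAbs else 0) else (if 0 < z then 0 else z.natAbs)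

lemma nexp_eq_zero_iff (c : Prop) [Decidable c] (z : ℤ) (hz : z ≠ 0) :
    nexp c z = 0 ↔ (c ↔ z < 0) := by
  unfold nexp
  by_cases hc : c <;> rcases lt_or_gt_of_ne hz with h | h <;>
    simp [hc, h, h.not_gt, Int.natAbs_eq_zero] <;> omega

lemma nexp_mem (c : Prop) [Decidable c] (z : ℤ) :
    nexp c z = 0 ∨ nexp c z = z.natAbs := by
  unfold nexp; by_cases hc : c <;> by_cases h : 0 < z <;> simp [hc, h]

lemma aux_factor (c : Prop) [Decidable c] (z : ℤ) (hz : z ≠ 0) :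
    (if c then (RatFunc.X : RatFunc ℚ) ^ z else 1) * (1 - RatFunc.X ^ z.natAbs)
      = (if z < 0 then -1 else 1) * RatFunc.X ^ nexp c z * (1 - RatFunc.X ^ z) := by
  have hX : (RatFunc.X : RatFunc ℚ) ≠ 0 := RatFunc.X_ne_zero
  rcases lt_or_gt_of_ne hz with h | h
  · have hb : (RatFunc.X : RatFunc ℚ) ^ z * RatFunc.X ^ z.natAbs = 1 := by
      rw [← zpow_natCast (RatFunc.X : RatFunc ℚ) z.natAbs, ← zpow_add₀ hX,
        ← Int.natAbs_neg z, Int.natAbs_of_nonneg (by omega : (0:ℤ) ≤ -z)]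
      simp
    by_cases hc : c <;> simp only [nexp, hc, if_true, if_false, h, h.not_gt, if_neg, pow_zero]
    · linear_combination -hb
    · linear_combination -hb
  · have hb : (RatFunc.X : RatFunc ℚ) ^ z = RatFunc.X ^ z.natAbs := by
      rw [← zpow_natCast (RatFunc.X : RatFunc ℚ) z.natAbs, Int.natAbs_of_nonneg h.le]
    by_cases hc : c <;> simp only [nexp, hc, if_true, if_false, h, h.not_gt, lt_asymm h, pow_zero] <;>
      rw [hb] <;> ring

def eS {n : ℕ} (v : Fin n → ℤ) (S : Finset (Fin n)) : ℕ := ∑ j, nexp (j ∈ S) (v j)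
lemma sum_eq_single_of_big {ι : Type*} (s : Finset ι) (f : ι → ℕ) (A : ℕ) (hA : 0 < A)
    (hf : ∀ i ∈ s, f i = 0 ∨ A ≤ f i) (hsum : ∑ i ∈ s, f i = A) :
    ∃ i0 ∈ s, f i0 = A ∧ ∀ i ∈ s, i ≠ i0 → f i = 0 := by
  classical
  have hne : ∃ i0 ∈ s, f i0 ≠ 0 := by
    by_contra hcon
    push_neg at hcon
    rw [Finset.sum_eq_zero hcon] at hsum
    omega
  obtain ⟨i0, hi0s, hi0⟩ := hne
  have hbig : A ≤ f i0 := (hf i0 hi0s).resolve_left hi0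
  have hsplit : f i0 + ∑ i ∈ s.erase i0, f i = A := by
    rw [Finset.add_sum_erase s f hi0s]; exact hsum
  have hzero : ∑ i ∈ s.erase i0, f i = 0 := by omega
  exact ⟨i0, hi0s, by omega, fun i his hne =>
    (Finset.sum_eq_zero_iff).mp hzero i (Finset.mem_erase.mpr ⟨hne, his⟩)⟩

section counting
variable {n : ℕ} (v : Fin n → ℤ) (A : ℕ)


lemma eS_neg {n : ℕ} (v : Fin n → ℤ) (hv : ∀ j, v j ≠ 0) :
    eS v (univ.filter fun j => v j < 0) = 0 := by
  apply Finset.sum_eq_zero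
  intro j _
  rw [nexp_eq_zero_iff _ _ (hv j)]
  simp

lemma eS_eq_zero {n : ℕ} (v : Fin n → ℤ) {S : Finset (Fin n)} (hv : ∀ j, v j ≠ 0)
    (h : eS v S = 0) : S = univ.filter fun j => v j < 0 := by
  ext j
  have := (Finset.sum_eq_zero_iff).mp h j (mem_univ j)
  rw [nexp_eq_zero_iff _ _ (hv j)] at this
  simp [this]

lemma card_e_zero {n : ℕ} (v : Fin n → ℤ) (hv : ∀ j, v j ≠ 0) (k : ℕ) :
    (((univ : Finset (Fin n)).powersetCard k).filter fun S => eS v S = 0).card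
      = if (univ.filter fun j => v j < 0).card = k then 1 else 0 := by
  by_cases hk : (univ.filter fun j => v j < 0).card = k
  · rw [if_pos hk]
    convert Finset.card_singleton (univ.filter fun j => v j < 0)
    ext S
    simp only [Finset.mem_filter, Finset.mem_powersetCard, Finset.mem_singleton]
    constructor
    · rintro ⟨_, h⟩; exact eS_eq_zero v hv h
    · rintro rfl; exact ⟨⟨Finset.subset_univ _, hk⟩, eS_neg v hv⟩
  · rw [if_neg hk]
    rw [Finset.card_eq_zero]
    ext S
    simp only [Finset.mem_filter, Finset.mem_powersetCard, Finset.notMem_empty, iff_false]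
    rintro ⟨⟨_, hcard⟩, h⟩
    exact hk (by rw [← eS_eq_zero v hv h]; exact hcard)

lemma eS_insert (hA : 0 < A) (hv : ∀ j, v j ≠ 0) (j : Fin n) (hj : v j = (A:ℤ)) :
    eS v (insert j (univ.filter fun i => v i < 0)) = A := by
  rw [eS, Finset.sum_eq_single j]
  · have h0 : 0 < v j := by rw [hj]; exact_mod_cast hA
    simp [nexp, h0, hj]
    omega
  · intro i _ hne
    rw [nexp_eq_zero_iff _ _ (hv i)]
    simp [Finset.mem_insert, hne]
  · simp

lemma eS_erase (hA : 0 < A) (hv : ∀ j, v j ≠ 0) (j : Fin n) (hj : v j = -(A:ℤ)) :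
    eS v ((univ.filter fun i => v i < 0).erase j) = A := by
  rw [eS, Finset.sum_eq_single j]
  · have h0 : v j < 0 := by rw [hj]; simp; exact_mod_cast hA
    simp [nexp, h0.not_gt, hj]
  · intro i _ hne
    rw [nexp_eq_zero_iff _ _ (hv i)]
    simp [Finset.mem_erase, hne]
  · simp

lemma eS_classify (hA : 0 < A) (hv : ∀ j, v j ≠ 0 ∧ A ≤ (v j).natAbs)
    {S : Finset (Fin n)} (h : eS v S = A) :
    (∃ j, v j = (A:ℤ) ∧ S = insert j (univ.filter fun i => v i < 0) ∧ j ∉ (univ.filter fun i => v i < 0))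
    ∨ (∃ j, v j = -(A:ℤ) ∧ S = (univ.filter fun i => v i < 0).erase j ∧ j ∈ (univ.filter fun i => v i < 0)) := by
  obtain ⟨j0, -, hj0A, hrest⟩ := sum_eq_single_of_big univ (fun j => nexp (j ∈ S) (v j)) A hA
    (fun i _ => (nexp_mem (i ∈ S) (v i)).imp id (fun hh => by rw [hh]; exact (hv i).2)) h
  have hmem : ∀ i, i ≠ j0 → (i ∈ S ↔ v i < 0) := by
    intro i hne
    rw [← nexp_eq_zero_iff _ _ (hv i).1]
    exact hrest i (mem_univ i) hne
  have hne0 : ¬ (j0 ∈ S ↔ v j0 < 0) := by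
    rw [← nexp_eq_zero_iff _ _ (hv j0).1]
    omega
  by_cases hS : j0 ∈ S
  · left
    have hpos : ¬ v j0 < 0 := fun hc => hne0 (iff_of_true hS hc)
    have h0 : 0 < v j0 := lt_of_le_of_ne (not_lt.mp hpos) (Ne.symm (hv j0).1)
    have hval : (v j0).natAbs = A := by
      have : nexp (j0 ∈ S) (v j0) = (v j0).natAbs := by simp [nexp, hS, h0]
      omega
    refine ⟨j0, ?_, ?_, by simp [hpos]⟩
    · omega
    · ext i
      by_cases hi : i = j0
      · subst hi; simp [hS]
      · simp only [Finset.mem_insert, Finset.mem_filter, Finset.mem_univ, true_and]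
        rw [hmem i hi]
        tauto
  · right
    have hneg : v j0 < 0 := by
      rcases lt_or_gt_of_ne (hv j0).1 with hh | hh
      · exact hh
      · exact absurd (iff_of_false hS (by omega)) hne0
    have hval : (v j0).natAbs = A := by
      have : nexp (j0 ∈ S) (v j0) = (v j0).natAbs := by simp [nexp, hS, hneg.not_gt]
      omega
    refine ⟨j0, by omega, ?_, by simp [hneg]⟩
    ext i
    by_cases hi : i = j0
    · subst hi; simp [hS]
    · simp only [Finset.mem_erase, Finset.mem_filter, Finset.mem_univ, true_and]
      rw [hmem i hi]
      tauto

lemma card_e_A (hA : 0 < A) (hv : ∀ j, v j ≠ 0 ∧ A ≤ (v j).natAbs) (k : ℕ) :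
    (((univ : Finset (Fin n)).powersetCard k).filter fun S => eS v S = A).card
      = (if (univ.filter fun j => v j < 0).card + 1 = k
            then (univ.filter fun j => v j = (A:ℤ)).card else 0)
        + (if (univ.filter fun j => v j < 0).card = k + 1
            then (univ.filter fun j => v j = -(A:ℤ)).card else 0) := by
  classical
  have hv1 : ∀ j, v j ≠ 0 := fun j => (hv j).1
  by_cases h1 : (univ.filter fun j => v j < 0).card + 1 = k
  · have h2 : ¬ ((univ.filter fun j => v j < 0).card = k + 1) := by omega
    rw [if_pos h1, if_neg h2, add_zero]
    symm
    apply Finset.card_bij (fun j _ => insert j (univ.filter fun i => v i < 0))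
    · intro j hj
      simp only [Finset.mem_filter, Finset.mem_univ, true_and] at hj
      have hjn : j ∉ (univ.filter fun i => v i < 0) := by
        simp only [Finset.mem_filter, Finset.mem_univ, true_and, not_lt, hj]
        positivity
      simp only [Finset.mem_filter, Finset.mem_powersetCard]
      exact ⟨⟨Finset.subset_univ _, by rw [Finset.card_insert_of_notMem hjn]; exact h1⟩,
        eS_insert v A hA hv1 j hj⟩
    · intro j hj j' hj' heq
      simp only [Finset.mem_filter, Finset.mem_univ, true_and] at hj hj'
      have hjn : j ∉ (univ.filter fun i => v i < 0) := by
        simp only [Finset.mem_filter, Finset.mem_univ, true_and, not_lt, hj]; positivity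
      have : j ∈ insert j' (univ.filter fun i => v i < 0) :=
        heq ▸ Finset.mem_insert_self j _
      rcases Finset.mem_insert.mp this with h | h
      · exact h
      · exact absurd h hjn
    · intro S hS
      simp only [Finset.mem_filter, Finset.mem_powersetCard] at hS
      obtain ⟨⟨-, hcard⟩, heA⟩ := hS
      rcases eS_classify v A hA hv heA with ⟨j, hjA, rfl, hjn⟩ | ⟨j, hjA, rfl, hjn⟩
      · exact ⟨j, by simp [hjA], rfl⟩
      · rw [Finset.card_erase_of_mem hjn] at hcard
        have : (univ.filter fun i => v i < 0).card ≠ 0 := Finset.card_ne_zero_of_mem hjn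
        omega
  · by_cases h2 : (univ.filter fun j => v j < 0).card = k + 1
    · rw [if_neg h1, if_pos h2, zero_add]
      symm
      apply Finset.card_bij (fun j _ => (univ.filter fun i => v i < 0).erase j)
      · intro j hj
        simp only [Finset.mem_filter, Finset.mem_univ, true_and] at hj
        have hjn : j ∈ (univ.filter fun i => v i < 0) := by
          simp only [Finset.mem_filter, Finset.mem_univ, true_and, hj]
          simp
          exact_mod_cast hA
        simp only [Finset.mem_filter, Finset.mem_powersetCard]
        exact ⟨⟨Finset.subset_univ _, by rw [Finset.card_erase_of_mem hjn, h2]; omega⟩,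
          eS_erase v A hA hv1 j hj⟩
      · intro j hj j' hj' heq
        simp only [Finset.mem_filter, Finset.mem_univ, true_and] at hj hj'
        have hjn' : j' ∈ (univ.filter fun i => v i < 0) := by
          simp only [Finset.mem_filter, Finset.mem_univ, true_and, hj']
          simp
          exact_mod_cast hA
        by_contra hne
        have hmem : j' ∈ (univ.filter fun i => v i < 0).erase j :=
          Finset.mem_erase.mpr ⟨fun hh => hne hh.symm, hjn'⟩
        rw [heq] at hmem
        exact (Finset.mem_erase.mp hmem).1 rfl
      · intro S hS
        simp only [Finset.mem_filter, Finset.mem_powersetCard] at hS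
        obtain ⟨⟨-, hcard⟩, heA⟩ := hS
        rcases eS_classify v A hA hv heA with ⟨j, hjA, rfl, hjn⟩ | ⟨j, hjA, rfl, hjn⟩
        · rw [Finset.card_insert_of_notMem hjn] at hcard
          omega
        · exact ⟨j, by simp [hjA], rfl⟩
    · rw [if_neg h1, if_neg h2, add_zero]
      rw [Finset.card_eq_zero, Finset.eq_empty_iff_forall_notMem]
      intro S hS
      simp only [Finset.mem_filter, Finset.mem_powersetCard] at hS
      obtain ⟨⟨-, hcard⟩, heA⟩ := hS
      rcases eS_classify v A hA hv heA with ⟨j, hjA, rfl, hjn⟩ | ⟨j, hjA, rfl, hjn⟩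
      · rw [Finset.card_insert_of_notMem hjn] at hcard
        omega
      · rw [Finset.card_erase_of_mem hjn] at hcard
        have : (univ.filter fun i => v i < 0).card ≠ 0 := Finset.card_ne_zero_of_mem hjn
        omega
end counting


lemma prod_one_sub_eps {R : Type*} [CommRing R] {ε : R} (hε : ε * ε = 0) {ι : Type*}
    (s : Finset ι) (d : ι → R) :
    ∏ i ∈ s, (1 - d i * ε) = 1 - (∑ i ∈ s, d i) * ε := by
  classical
  induction s using Finset.cons_induction with
  | empty => simp
  | cons x s hx ih =>
      rw [Finset.prod_cons, Finset.sum_cons, ih]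
      linear_combination (d x * (∑ i ∈ s, d i)) * hε

lemma pi_pow_gt (A m : ℕ) (h : A < m) :
    Ideal.Quotient.mk (Ideal.span {(Polynomial.X : Polynomial ℚ) ^ (A+1)}) (Polynomial.X ^ m) = 0 := by
  rw [Ideal.Quotient.eq_zero_iff_mem, Ideal.mem_span_singleton]
  exact pow_dvd_pow _ (by omega)

lemma eps_sq (A : ℕ) (hA : 0 < A) :
    (Ideal.Quotient.mk (Ideal.span {(Polynomial.X : Polynomial ℚ) ^ (A+1)}) Polynomial.X) ^ A *
    (Ideal.Quotient.mk (Ideal.span {(Polynomial.X : Polynomial ℚ) ^ (A+1)}) Polynomial.X) ^ A = 0 := by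
  rw [← map_pow, ← map_mul, ← pow_add]
  exact pi_pow_gt A (A + A) (by omega)

lemma coeff_eq_of_quot (A : ℕ) {x y : Polynomial ℚ}
    (h : Ideal.Quotient.mk (Ideal.span {(Polynomial.X : Polynomial ℚ) ^ (A+1)}) x =
         Ideal.Quotient.mk (Ideal.span {(Polynomial.X : Polynomial ℚ) ^ (A+1)}) y) :
    x.coeff A = y.coeff A := by
  obtain ⟨c, hc⟩ := Ideal.mem_span_singleton.mp (Ideal.Quotient.eq.mp h)
  have hc' : x - y = c * Polynomial.X ^ (A+1) := by rw [hc]; ring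
  have h2 := congrArg (fun q => Polynomial.coeff q A) hc'
  simp only [Polynomial.coeff_sub, Polynomial.coeff_mul_X_pow'] at h2
  rw [if_neg (by omega)] at h2
  linarith


lemma eS_zero_or_big {n : ℕ} (v : Fin n → ℤ) (A : ℕ)
    (hv : ∀ j, v j ≠ 0 ∧ A ≤ (v j).natAbs) (S : Finset (Fin n)) :
    eS v S = 0 ∨ A ≤ eS v S := by
  classical
  by_cases h : eS v S = 0
  · exact Or.inl h
  · right
    rw [eS] at h ⊢
    obtain ⟨j, -, hj⟩ := Finset.exists_ne_zero_of_sum_ne_zero h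
    have h1 : A ≤ nexp (j ∈ S) (v j) := by
      rcases nexp_mem (j ∈ S) (v j) with h2 | h2
      · omega
      · rw [h2]; exact (hv j).2
    exact le_trans h1 (Finset.single_le_sum (f := fun i => nexp (i ∈ S) (v i)) (fun i _ => Nat.zero_le _) (mem_univ j))

/-- numerator polynomial -/
noncomputable def NpD {n : ℕ} (k : ℕ) (v : Fin n → ℤ) : Polynomial ℚ :=
  ∑ S ∈ (univ : Finset (Fin n)).powersetCard k, Polynomial.X ^ (eS v S)

/-- denominator polynomial -/
noncomputable def DpD {n : ℕ} (v : Fin n → ℤ) : Polynomial ℚ :=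
  ∏ j : Fin n, (1 - Polynomial.X ^ ((v j).natAbs))

lemma pi_DpD {n : ℕ} (A : ℕ) (hA : 0 < A) (v : Fin n → ℤ)
    (hv : ∀ j, v j ≠ 0 ∧ A ≤ (v j).natAbs) :
    Ideal.Quotient.mk (Ideal.span {(Polynomial.X : Polynomial ℚ) ^ (A+1)}) (DpD v)
      = 1 - ((univ.filter fun j => (v j).natAbs = A).card : _)
          * (Ideal.Quotient.mk (Ideal.span {(Polynomial.X : Polynomial ℚ) ^ (A+1)}) Polynomial.X) ^ A := by
  classical
  rw [DpD, map_prod]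
  have hfac : ∀ j : Fin n,
      Ideal.Quotient.mk (Ideal.span {(Polynomial.X : Polynomial ℚ) ^ (A+1)})
          (1 - Polynomial.X ^ ((v j).natAbs))
        = 1 - (if (v j).natAbs = A then (1 : _) else 0)
            * (Ideal.Quotient.mk (Ideal.span {(Polynomial.X : Polynomial ℚ) ^ (A+1)}) Polynomial.X) ^ A := by
    intro j
    rcases eq_or_lt_of_le (hv j).2 with heq | hlt
    · rw [map_sub, map_one, map_pow, ← heq, if_pos rfl, one_mul]
    · rw [map_sub, map_one, pi_pow_gt A _ hlt, if_neg (by omega), zero_mul, sub_zero]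
  rw [Finset.prod_congr rfl (fun j _ => hfac j), prod_one_sub_eps (eps_sq A hA), Finset.sum_boole]

lemma pi_NpD {n : ℕ} (A k : ℕ) (hA : 0 < A) (v : Fin n → ℤ)
    (hv : ∀ j, v j ≠ 0 ∧ A ≤ (v j).natAbs) :
    Ideal.Quotient.mk (Ideal.span {(Polynomial.X : Polynomial ℚ) ^ (A+1)}) (NpD k v)
      = ((if (univ.filter fun j => v j < 0).card = k then 1 else 0 : ℕ) : _)
        + (((if (univ.filter fun j => v j < 0).card + 1 = k
                then (univ.filter fun j => v j = (A:ℤ)).card else 0)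
            + (if (univ.filter fun j => v j < 0).card = k + 1
                then (univ.filter fun j => v j = -(A:ℤ)).card else 0) : ℕ) : _)
          * (Ideal.Quotient.mk (Ideal.span {(Polynomial.X : Polynomial ℚ) ^ (A+1)}) Polynomial.X) ^ A := by
  classical
  rw [NpD, map_sum]
  have hper : ∀ S ∈ (univ : Finset (Fin n)).powersetCard k,
      Ideal.Quotient.mk (Ideal.span {(Polynomial.X : Polynomial ℚ) ^ (A+1)}) (Polynomial.X ^ eS v S)
        = (if eS v S = 0 then (1 : _) else 0)
          + (if eS v S = A then (1 : _) else 0)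
            * (Ideal.Quotient.mk (Ideal.span {(Polynomial.X : Polynomial ℚ) ^ (A+1)}) Polynomial.X) ^ A := by
    intro S _
    rcases eS_zero_or_big v A hv S with h0 | hbig
    · rw [h0, if_pos rfl, if_neg (by omega), pow_zero, map_one, zero_mul, add_zero]
    · rcases eq_or_lt_of_le hbig with heq | hlt
      · rw [← heq, map_pow, if_neg (by omega), if_pos rfl, one_mul, zero_add]
      · rw [pi_pow_gt A _ hlt, if_neg (by omega), if_neg (by omega), zero_mul, add_zero]
  rw [Finset.sum_congr rfl hper, Finset.sum_add_distrib, ← Finset.sum_mul, Finset.sum_boole,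
    Finset.sum_boole, card_e_zero v (fun j => (hv j).1) k, card_e_A v A hA hv k]

lemma key_pair {R : Type*} [CommRing R] {ε : R} (hε : ε * ε = 0) (lam k d1 d2 tN : ℕ) :
    (-1 : R) ^ lam * (((if lam = k then 1 else 0 : ℕ) : R)
        + (((if lam + 1 = k then d1 else 0) + (if lam = k + 1 then d2 else 0) : ℕ) : R) * ε)
      * (1 - (tN : R) * ε)
    = ((if lam = k then (-1 : ℤ) ^ k else 0 : ℤ) : R)
      + (((if lam + 1 = k then -(-1 : ℤ) ^ k * (d1 : ℤ) else 0)
          + (if lam = k + 1 then -(-1 : ℤ) ^ k * (d2 : ℤ) else 0)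
          - (if lam = k then (-1 : ℤ) ^ k * (tN : ℤ) else 0) : ℤ) : R) * ε := by
  by_cases h0 : lam = k
  · subst h0
    rw [if_pos rfl, if_pos rfl, if_pos rfl, if_neg (by omega), if_neg (by omega),
      if_neg (by omega), if_neg (by omega)]
    push_cast
    ring
  · by_cases h1 : lam + 1 = k
    · subst h1
      rw [if_neg h0, if_neg h0, if_neg h0, if_pos rfl, if_pos rfl,
        if_neg (by omega), if_neg (by omega)]
      push_cast
      linear_combination (-((-1 : R) ^ lam) * (d1 : R) * (tN : R)) * hε
    · by_cases h2 : lam = k + 1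
      · subst h2
        rw [if_neg h0, if_neg h0, if_neg h0, if_neg h1, if_neg h1, if_pos rfl, if_pos rfl]
        push_cast
        linear_combination ((-1 : R) ^ k * (d2 : R) * (tN : R)) * hε
      · rw [if_neg h0, if_neg h0, if_neg h0, if_neg h1, if_neg h1, if_neg h2, if_neg h2]
        push_cast
        ring

lemma int_pair_eq (A : ℕ) (hA : 0 < A) {U1 V1 U2 V2 : ℤ}
    (h : (U1 : Polynomial ℚ ⧸ Ideal.span {(Polynomial.X : Polynomial ℚ) ^ (A+1)})
          + (V1 : Polynomial ℚ ⧸ Ideal.span {(Polynomial.X : Polynomial ℚ) ^ (A+1)})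
            * (Ideal.Quotient.mk (Ideal.span {(Polynomial.X : Polynomial ℚ) ^ (A+1)}) Polynomial.X) ^ A
        = (U2 : Polynomial ℚ ⧸ Ideal.span {(Polynomial.X : Polynomial ℚ) ^ (A+1)})
          + (V2 : Polynomial ℚ ⧸ Ideal.span {(Polynomial.X : Polynomial ℚ) ^ (A+1)})
            * (Ideal.Quotient.mk (Ideal.span {(Polynomial.X : Polynomial ℚ) ^ (A+1)}) Polynomial.X) ^ A) :
    V1 = V2 := by
  have hx : ∀ z1 z2 : ℤ,
      Ideal.Quotient.mk (Ideal.span {(Polynomial.X : Polynomial ℚ) ^ (A+1)})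
          ((z1 : Polynomial ℚ) + (z2 : Polynomial ℚ) * Polynomial.X ^ A)
        = (z1 : Polynomial ℚ ⧸ Ideal.span {(Polynomial.X : Polynomial ℚ) ^ (A+1)})
          + (z2 : Polynomial ℚ ⧸ Ideal.span {(Polynomial.X : Polynomial ℚ) ^ (A+1)})
            * (Ideal.Quotient.mk (Ideal.span {(Polynomial.X : Polynomial ℚ) ^ (A+1)}) Polynomial.X) ^ A := by
    intro z1 z2
    rw [map_add, map_mul, map_pow, map_intCast, map_intCast]
  have hco := coeff_eq_of_quot A ((hx U1 V1).trans (h.trans (hx U2 V2).symm))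
  have hcx : ∀ z1 z2 : ℤ,
      ((z1 : Polynomial ℚ) + (z2 : Polynomial ℚ) * Polynomial.X ^ A).coeff A = (z2 : ℚ) := by
    intro z1 z2
    rw [Polynomial.coeff_add, ← Polynomial.C_eq_intCast z1, ← Polynomial.C_eq_intCast z2,
      Polynomial.coeff_C, if_neg (by omega), Polynomial.coeff_C_mul, Polynomial.coeff_X_pow,
      if_pos rfl, mul_one, zero_add]
  rw [hcx, hcx] at hco
  exact_mod_cast hco


theorem li_identities_imply_key_equation
    (n : ℕ) (hn : 1 ≤ n) (a : ℤ) (ha : 0 < a)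
    (P : Type*) [Fintype P] (w : P → Fin n → ℤ)
    (hw : ∀ p j, w p j ≠ 0 ∧ a ≤ |w p j|)
    (hLi : ∀ k ≤ n,
      ∑ p : P,
          (∑ S ∈ (univ : Finset (Fin n)).powersetCard k,
              ∏ j ∈ S, (RatFunc.X : RatFunc ℚ) ^ (w p j)) /
            ∏ j : Fin n, (1 - (RatFunc.X : RatFunc ℚ) ^ (w p j))
        = (-1) ^ k *
            (((univ : Finset P).filter fun p =>
                ((univ : Finset (Fin n)).filter fun j => w p j < 0).card = k).card
              : RatFunc ℚ)) :
    ∀ k ≤ n,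
      ∑ p ∈ (univ : Finset P).filter
          (fun p => ((univ : Finset (Fin n)).filter fun j => w p j < 0).card = k),
          (((univ : Finset (Fin n)).filter fun j => w p j = -a).card +
            ((univ : Finset (Fin n)).filter fun j => w p j = a).card)
        = (∑ p ∈ (univ : Finset P).filter
              (fun p => ((univ : Finset (Fin n)).filter fun j => w p j < 0).card + 1 = k),
              ((univ : Finset (Fin n)).filter fun j => w p j = a).card) +
          ∑ p ∈ (univ : Finset P).filter
              (fun p => ((univ : Finset (Fin n)).filter fun j => w p j < 0).card = k + 1),
              ((univ : Finset (Fin n)).filter fun j => w p j = -a).card := by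
  classical
  obtain ⟨A, rfl⟩ : ∃ A : ℕ, a = (A : ℤ) := ⟨a.toNat, (Int.toNat_of_nonneg ha.le).symm⟩
  have hA : 0 < A := by exact_mod_cast ha
  have hv : ∀ (p : P) (j : Fin n), w p j ≠ 0 ∧ A ≤ (w p j).natAbs := by
    intro p j
    refine ⟨(hw p j).1, ?_⟩
    have h2 := (hw p j).2
    rw [Int.abs_eq_natAbs] at h2
    exact_mod_cast h2
  intro k hk
  have hden : ∀ p : P, (∏ j : Fin n, (1 - (RatFunc.X : RatFunc ℚ) ^ (w p j))) ≠ 0 :=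
    fun p => Finset.prod_ne_zero_iff.mpr fun j _ => aux_one_sub_ne _ (hv p j).1
  -- Step 1: per-p identity in RatFunc
  have hstep1 : ∀ p : P,
      (∑ S ∈ (univ : Finset (Fin n)).powersetCard k,
          ∏ j ∈ S, (RatFunc.X : RatFunc ℚ) ^ (w p j))
          * algebraMap (Polynomial ℚ) (RatFunc ℚ) (DpD (w p))
        = (-1) ^ (((univ : Finset (Fin n)).filter fun j => w p j < 0).card)
            * algebraMap (Polynomial ℚ) (RatFunc ℚ) (NpD k (w p))
            * ∏ j : Fin n, (1 - (RatFunc.X : RatFunc ℚ) ^ (w p j)) := by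
    intro p
    have hD : algebraMap (Polynomial ℚ) (RatFunc ℚ) (DpD (w p))
        = ∏ j : Fin n, (1 - (RatFunc.X : RatFunc ℚ) ^ ((w p j).natAbs)) := by
      rw [DpD, map_prod]
      simp only [map_sub, map_one, map_pow, RatFunc.algebraMap_X]
    have hN : algebraMap (Polynomial ℚ) (RatFunc ℚ) (NpD k (w p))
        = ∑ S ∈ (univ : Finset (Fin n)).powersetCard k,
            (RatFunc.X : RatFunc ℚ) ^ (eS (w p) S) := by
      rw [NpD, map_sum]
      simp only [map_pow, RatFunc.algebraMap_X]
    rw [hD, hN, Finset.sum_mul, Finset.mul_sum, Finset.sum_mul]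
    refine Finset.sum_congr rfl fun S _ => ?_
    have h1 : (∏ j ∈ S, (RatFunc.X : RatFunc ℚ) ^ (w p j))
        = ∏ j : Fin n, (if j ∈ S then (RatFunc.X : RatFunc ℚ) ^ (w p j) else 1) := by
      rw [Finset.prod_ite_mem, Finset.univ_inter]
    have h2 : ((-1 : RatFunc ℚ)) ^ (((univ : Finset (Fin n)).filter fun j => w p j < 0).card)
        = ∏ j : Fin n, (if w p j < 0 then (-1 : RatFunc ℚ) else 1) := by
      rw [Finset.prod_ite, Finset.prod_const, Finset.prod_const, one_pow, mul_one]
    have h3 : (RatFunc.X : RatFunc ℚ) ^ (eS (w p) S)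
        = ∏ j : Fin n, (RatFunc.X : RatFunc ℚ) ^ (nexp (j ∈ S) (w p j)) := by
      rw [eS, Finset.prod_pow_eq_pow_sum]
    rw [h1, h2, h3, ← Finset.prod_mul_distrib, ← Finset.prod_mul_distrib,
      ← Finset.prod_mul_distrib]
    exact Finset.prod_congr rfl fun j _ => aux_factor (j ∈ S) (w p j) (hv p j).1
  -- Step 2: polynomial identity
  have hpoly : (∑ p : P,
        (-1 : Polynomial ℚ) ^ (((univ : Finset (Fin n)).filter fun j => w p j < 0).card)
          * NpD k (w p) * ∏ q ∈ univ.erase p, DpD (w q))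
      = (-1 : Polynomial ℚ) ^ k
          * (((univ : Finset P).filter fun p =>
                ((univ : Finset (Fin n)).filter fun j => w p j < 0).card = k).card : Polynomial ℚ)
          * ∏ q : P, DpD (w q) := by
    apply RatFunc.algebraMap_injective ℚ
    have hmul := congrArg (fun z : RatFunc ℚ =>
      z * algebraMap (Polynomial ℚ) (RatFunc ℚ) (∏ q : P, DpD (w q))) (hLi k hk)
    rw [Finset.sum_mul] at hmul
    have hterm : ∀ p : P,
        ((∑ S ∈ (univ : Finset (Fin n)).powersetCard k,
            ∏ j ∈ S, (RatFunc.X : RatFunc ℚ) ^ (w p j)) /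
            ∏ j : Fin n, (1 - (RatFunc.X : RatFunc ℚ) ^ (w p j)))
            * algebraMap (Polynomial ℚ) (RatFunc ℚ) (∏ q : P, DpD (w q))
          = (-1) ^ (((univ : Finset (Fin n)).filter fun j => w p j < 0).card)
              * algebraMap (Polynomial ℚ) (RatFunc ℚ) (NpD k (w p))
              * algebraMap (Polynomial ℚ) (RatFunc ℚ) (∏ q ∈ univ.erase p, DpD (w q)) := by
      intro p
      have e1 : algebraMap (Polynomial ℚ) (RatFunc ℚ) (∏ q : P, DpD (w q))
          = algebraMap (Polynomial ℚ) (RatFunc ℚ) (DpD (w p))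
            * algebraMap (Polynomial ℚ) (RatFunc ℚ) (∏ q ∈ univ.erase p, DpD (w q)) := by
        rw [← map_mul]
        congr 1
        exact (Finset.mul_prod_erase univ (fun q => DpD (w q)) (mem_univ p)).symm
      rw [e1, div_mul_eq_mul_div, ← mul_assoc, hstep1 p, mul_right_comm, mul_div_assoc,
        div_self (hden p), mul_one]
    simp only [hterm] at hmul
    rw [map_sum]
    simp only [map_mul, map_pow, map_neg, map_one, map_natCast]
    exact hmul
  -- Step 3: pass to the quotient ring
  have hquot := congrArg
    (Ideal.Quotient.mk (Ideal.span {(Polynomial.X : Polynomial ℚ) ^ (A+1)})) hpoly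
  rw [map_sum] at hquot
  have hL : ∀ p : P,
      Ideal.Quotient.mk (Ideal.span {(Polynomial.X : Polynomial ℚ) ^ (A+1)})
          ((-1 : Polynomial ℚ) ^ (((univ : Finset (Fin n)).filter fun j => w p j < 0).card)
            * NpD k (w p) * ∏ q ∈ univ.erase p, DpD (w q))
        = ((if ((univ : Finset (Fin n)).filter fun j => w p j < 0).card = k
              then (-1:ℤ)^k else 0 : ℤ) : _)
          + (((if ((univ : Finset (Fin n)).filter fun j => w p j < 0).card + 1 = k
                then -(-1:ℤ)^k * (((univ : Finset (Fin n)).filter fun j => w p j = (A:ℤ)).card : ℤ)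
                else 0)
              + (if ((univ : Finset (Fin n)).filter fun j => w p j < 0).card = k + 1
                then -(-1:ℤ)^k * (((univ : Finset (Fin n)).filter fun j => w p j = -(A:ℤ)).card : ℤ)
                else 0)
              - (if ((univ : Finset (Fin n)).filter fun j => w p j < 0).card = k
                then (-1:ℤ)^k * ((∑ q ∈ univ.erase p,
                    ((univ : Finset (Fin n)).filter fun j => (w q j).natAbs = A).card : ℕ) : ℤ)
                else 0) : ℤ) : _)
            * (Ideal.Quotient.mk (Ideal.span {(Polynomial.X : Polynomial ℚ) ^ (A+1)})
                Polynomial.X) ^ A := by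
    intro p
    rw [map_mul, map_mul, map_pow, map_neg, map_one, map_prod,
      pi_NpD A k hA (w p) (hv p),
      Finset.prod_congr rfl (fun q _ => pi_DpD A hA (w q) (hv q)),
      prod_one_sub_eps (eps_sq A hA), ← Nat.cast_sum]
    exact key_pair (eps_sq A hA) _ k _ _ _
  simp only [hL] at hquot
  rw [Finset.sum_add_distrib, ← Finset.sum_mul, ← Int.cast_sum, ← Int.cast_sum] at hquot
  have hR2 : Ideal.Quotient.mk (Ideal.span {(Polynomial.X : Polynomial ℚ) ^ (A+1)})
        ((-1 : Polynomial ℚ) ^ k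
          * (((univ : Finset P).filter fun p =>
                ((univ : Finset (Fin n)).filter fun j => w p j < 0).card = k).card : Polynomial ℚ)
          * ∏ q : P, DpD (w q))
      = (((((-1:ℤ)^k) * (((univ : Finset P).filter fun p =>
              ((univ : Finset (Fin n)).filter fun j => w p j < 0).card = k).card : ℤ)) : ℤ) : _)
        + ((-((-1:ℤ)^k) * (((univ : Finset P).filter fun p =>
              ((univ : Finset (Fin n)).filter fun j => w p j < 0).card = k).card : ℤ)
            * ((∑ q : P,
                ((univ : Finset (Fin n)).filter fun j => (w q j).natAbs = A).card : ℕ) : ℤ) : ℤ) : _)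
          * (Ideal.Quotient.mk (Ideal.span {(Polynomial.X : Polynomial ℚ) ^ (A+1)})
              Polynomial.X) ^ A := by
    rw [map_mul, map_mul, map_pow, map_neg, map_one, map_natCast, map_prod,
      Finset.prod_congr rfl (fun q _ => pi_DpD A hA (w q) (hv q)),
      prod_one_sub_eps (eps_sq A hA), ← Nat.cast_sum]
    push_cast
    ring
  rw [hR2] at hquot
  have hV := int_pair_eq A hA hquot
  -- Step 4: integer arithmetic
  rw [Finset.sum_sub_distrib, Finset.sum_add_distrib, ← Finset.sum_filter, ← Finset.sum_filter,
    ← Finset.sum_filter, ← Finset.mul_sum, ← Finset.mul_sum, ← Finset.mul_sum] at hV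
  have hT : ∀ p ∈ (univ : Finset P).filter
      (fun p => ((univ : Finset (Fin n)).filter fun j => w p j < 0).card = k),
      ((∑ q ∈ univ.erase p,
          ((univ : Finset (Fin n)).filter fun j => (w q j).natAbs = A).card : ℕ) : ℤ)
        = ((∑ q : P, ((univ : Finset (Fin n)).filter fun j => (w q j).natAbs = A).card : ℕ) : ℤ)
          - (((univ : Finset (Fin n)).filter fun j => (w p j).natAbs = A).card : ℤ) := by
    intro p _
    have h5 := Finset.add_sum_erase (univ : Finset P)
      (fun q => ((univ : Finset (Fin n)).filter fun j => (w q j).natAbs = A).card) (mem_univ p)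
    rw [← h5]
    push_cast
    ring
  rw [Finset.sum_congr rfl hT, Finset.sum_sub_distrib, Finset.sum_const, nsmul_eq_mul] at hV
  have hS : ((-1:ℤ)^k) ≠ 0 := pow_ne_zero _ (by norm_num)
  have h8 : (-1:ℤ)^k * ((∑ p ∈ (univ : Finset P).filter
        (fun p => ((univ : Finset (Fin n)).filter fun j => w p j < 0).card = k),
        (((univ : Finset (Fin n)).filter fun j => (w p j).natAbs = A).card : ℤ))
      - (∑ p ∈ (univ : Finset P).filter
          (fun p => ((univ : Finset (Fin n)).filter fun j => w p j < 0).card + 1 = k),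
          (((univ : Finset (Fin n)).filter fun j => w p j = (A:ℤ)).card : ℤ))
      - (∑ p ∈ (univ : Finset P).filter
          (fun p => ((univ : Finset (Fin n)).filter fun j => w p j < 0).card = k + 1),
          (((univ : Finset (Fin n)).filter fun j => w p j = -(A:ℤ)).card : ℤ)))
      = (-1:ℤ)^k * 0 := by
    rw [mul_zero]
    linear_combination hV
  have h9 := mul_left_cancel₀ hS h8
  have hsplitc : ∀ p : P,
      ((univ : Finset (Fin n)).filter fun j => (w p j).natAbs = A).card
        = ((univ : Finset (Fin n)).filter fun j => w p j = -(A:ℤ)).card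
          + ((univ : Finset (Fin n)).filter fun j => w p j = (A:ℤ)).card := by
    intro p
    have heq : ((univ : Finset (Fin n)).filter fun j => (w p j).natAbs = A)
        = ((univ : Finset (Fin n)).filter fun j => w p j = -(A:ℤ))
          ∪ ((univ : Finset (Fin n)).filter fun j => w p j = (A:ℤ)) := by
      rw [← Finset.filter_or]
      refine Finset.filter_congr fun j _ => ?_
      rw [Int.natAbs_eq_iff]
      tauto
    rw [heq, Finset.card_union_of_disjoint]
    rw [Finset.disjoint_left]
    intro j hj1 hj2
    simp only [Finset.mem_filter] at hj1 hj2
    omega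
  have h10 : (∑ p ∈ (univ : Finset P).filter
        (fun p => ((univ : Finset (Fin n)).filter fun j => w p j < 0).card = k),
        ((((univ : Finset (Fin n)).filter fun j => w p j = -(A:ℤ)).card
          + ((univ : Finset (Fin n)).filter fun j => w p j = (A:ℤ)).card : ℕ) : ℤ))
      = (∑ p ∈ (univ : Finset P).filter
          (fun p => ((univ : Finset (Fin n)).filter fun j => w p j < 0).card + 1 = k),
          (((univ : Finset (Fin n)).filter fun j => w p j = (A:ℤ)).card : ℤ))
        + ∑ p ∈ (univ : Finset P).filter
            (fun p => ((univ : Finset (Fin n)).filter fun j => w p j < 0).card = k + 1),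
            (((univ : Finset (Fin n)).filter fun j => w p j = -(A:ℤ)).card : ℤ) := by
    have h11 : ∀ p ∈ (univ : Finset P).filter
        (fun p => ((univ : Finset (Fin n)).filter fun j => w p j < 0).card = k),
        ((((univ : Finset (Fin n)).filter fun j => w p j = -(A:ℤ)).card
          + ((univ : Finset (Fin n)).filter fun j => w p j = (A:ℤ)).card : ℕ) : ℤ)
          = (((univ : Finset (Fin n)).filter fun j => (w p j).natAbs = A).card : ℤ) := by
      intro p _
      rw [hsplitc p]
    rw [Finset.sum_congr rfl h11]
    linarith [h9]
  exact_mod_cast h10
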